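/- Let R = μ₀R⁰ + Σ_{i=1}^m μᵢR^{Jᵢ} be a quasi-Clifford algebraic curvature tensor on a scalar product space (V,g), with Hurwitz-like constants c₁,…,c_m. Then for every X ∈ V and every 1 ≤ i ≤ m one has 𝒥_X(JᵢX) = ε_X(μ₀ + 3cᵢμᵢ)·JᵢX, and 𝒥_X(Z) = ε_X·μ₀·Z for every Z ∈ V orthogonal to each of X, J₁X, …, J_mX. -/

import Mathlib

open Module Finset

/-- The algebraic curvature tensor `R⁰` of constant sectional curvature one. -/
def R0 {V : Type*} [AddCommGroup V] [Module ℝ V] (g : LinearMap.BilinForm ℝ V)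
    (X Y Z W : V) : ℝ :=
  g Y Z * g X W - g X Z * g Y W

/-- The algebraic curvature tensor `R^J` generated by a `g`-skew-adjoint endomorphism `J`. -/
def RJ {V : Type*} [AddCommGroup V] [Module ℝ V] (g : LinearMap.BilinForm ℝ V)
    (J : V →ₗ[ℝ] V) (X Y Z W : V) : ℝ :=
  g (J X) Z * g (J Y) W - g (J Y) Z * g (J X) W + 2 * g (J X) Y * g (J Z) W
/-- for a quasi-Clifford curvature tensor,
`𝒥_X(JᵢX) = ε_X(μ₀+3cᵢμᵢ) JᵢX`, and `𝒥_X(Z) = ε_X μ₀ Z` for `Z` orthogonal to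
each of `X, J₁X, …, J_mX`. -/
theorem quasiClifford_jacobi_eigenvectors
    {V : Type*} [AddCommGroup V] [Module ℝ V] [FiniteDimensional ℝ V]
    (g : LinearMap.BilinForm ℝ V) (hsymm : ∀ x y, g x y = g y x) (hnd : g.Nondegenerate)
    {m : ℕ} (μ₀ : ℝ) (μ c : Fin m → ℝ) (J : Fin m → V →ₗ[ℝ] V)
    (hskew : ∀ i, ∀ x y : V, g (J i x) y = - g x (J i y))
    (hhur : ∀ i j, J i ∘ₗ J j + J j ∘ₗ J i
      = ((if i = j then 2 * c i else 0 : ℝ) • LinearMap.id : V →ₗ[ℝ] V))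
    (R : V → V → V → V → ℝ)
    (hR : ∀ X Y Z W, R X Y Z W = μ₀ * R0 g X Y Z W + ∑ i, μ i * RJ g (J i) X Y Z W)
    (Jac : V → V →ₗ[ℝ] V)
    (hJac : ∀ X Y Z, g (Jac X Y) Z = R Y X X Z) :
    ∀ X : V,
      (∀ i, Jac X (J i X) = (g X X * (μ₀ + 3 * c i * μ i)) • J i X) ∧
      (∀ Z : V, g Z X = 0 → (∀ i, g Z (J i X) = 0) → Jac X Z = (g X X * μ₀) • Z) := by
  intro X
  have key : ∀ a b : V, (∀ w, g a w = g b w) → a = b := by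
    intro a b h
    have h0 : ∀ w, g (a - b) w = 0 := by
      intro w; simp [h w]
    have := hnd.1 (a - b) h0
    exact sub_eq_zero.mp this
  have hJxx : ∀ i (x : V), g (J i x) x = 0 := by
    intro i x
    have h1 := hskew i x x
    have h2 := hsymm (J i x) x
    linarith
  have hJ2 : ∀ i, J i (J i X) = c i • X := by
    intro i
    have := congrArg (fun f : V →ₗ[ℝ] V => f X) (hhur i i)
    simp at this
    have h2 : (2 : ℝ) • J i (J i X) = (2 * c i) • X := by
      rw [two_smul]; simpa [two_mul] using this
    have := congrArg (fun v => (2 : ℝ)⁻¹ • v) h2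
    simpa [smul_smul, mul_assoc] using this
  have hcross : ∀ i k, i ≠ k → g (J i (J k X)) X = 0 := by
    intro i k hik
    have hanti : J i (J k X) = - J k (J i X) := by
      have := congrArg (fun f : V →ₗ[ℝ] V => f X) (hhur i k)
      simp [if_neg hik] at this
      linear_combination (norm := module) this
    have h1 : g (J i (J k X)) X = - g (J k X) (J i X) := hskew i (J k X) X
    have h2 : g (J k (J i X)) X = - g (J i X) (J k X) := hskew k (J i X) X
    have h3 : g (J i (J k X)) X = - g (J k (J i X)) X := by
      rw [hanti]; simp
    rw [h1, h2, hsymm (J i X) (J k X)] at h3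
    linarith [h3]
  refine ⟨?_, ?_⟩
  · intro k
    apply key
    intro w
    rw [hJac, hR]
    have hsum : ∑ i, μ i * RJ g (J i) (J k X) X X w
        = μ k * (3 * c k * g X X * g (J k X) w) := by
      rw [Finset.sum_eq_single k]
      · unfold RJ
        rw [hJ2 k]
        simp only [map_smul, LinearMap.smul_apply, smul_eq_mul, hJxx]
        ring
      · intro i _ hik
        unfold RJ
        rw [hcross i k hik, hJxx]
        ring
      · intro h; exact absurd (Finset.mem_univ k) h
    rw [hsum]
    unfold R0
    rw [hJxx k X]
    simp [hsymm]
    ring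
  · intro Z hZX hZJ
    apply key
    intro w
    rw [hJac, hR]
    have hJZ : ∀ i, g (J i Z) X = 0 := by
      intro i
      rw [hskew i Z X, hZJ i, neg_zero]
    have hsum : ∑ i, μ i * RJ g (J i) Z X X w = 0 := by
      apply Finset.sum_eq_zero
      intro i _
      unfold RJ
      rw [hJZ i, hJxx]
      ring
    rw [hsum]
    unfold R0
    rw [hZX]
    simp
    ring
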